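/- Let $M$ be an archimedean quadratic module in a commutative ring $A$, and let $f \in A$ with $\phi(f) > 0$ for every ring homomorphism $\phi: A \to \mathbb{R}$ with $\phi|_M \geq 0$. Then $nf \in M$ for some $n \in \mathbb{N}$. (Jacobi–Putinar theorem.) -/

import Mathlib

namespace JP

variable {A : Type*} [CommRing A]

/-- The cone of sums of squares in a commutative ring. -/
def Cone (A : Type*) [CommRing A] : AddSubmonoid A :=
  AddSubmonoid.closure {x : A | ∃ a, x = a ^ 2}

lemma sq_mem_cone (a : A) : a ^ 2 ∈ Cone A :=
  AddSubmonoid.subset_closure ⟨a, rfl⟩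

lemma one_mem_cone : (1 : A) ∈ Cone A := by
  simpa using sq_mem_cone (1 : A)

lemma natsmul_one_mem_cone (n : ℕ) : n • (1 : A) ∈ Cone A :=
  AddSubmonoid.nsmul_mem _ one_mem_cone n

lemma cone_mul_cone {x y : A} (hx : x ∈ Cone A) (hy : y ∈ Cone A) : x * y ∈ Cone A := by
  induction hx using AddSubmonoid.closure_induction with
  | mem z hz =>
    obtain ⟨a, rfl⟩ := hz
    induction hy using AddSubmonoid.closure_induction with
    | mem w hw =>
      obtain ⟨b, rfl⟩ := hw
      have : a ^ 2 * b ^ 2 = (a * b) ^ 2 := by ring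
      rw [this]; exact sq_mem_cone _
    | zero => simpa using (Cone A).zero_mem
    | add u v _ _ hu hv => rw [mul_add]; exact (Cone A).add_mem hu hv
  | zero => simpa using (Cone A).zero_mem
  | add u v _ _ hu hv => rw [add_mul]; exact (Cone A).add_mem hu hv

/-- A "good cone": divisibly closed quadratic module (possibly improper). -/
structure GC (A : Type*) [CommRing A] where
  S : Set A
  one_mem : (1 : A) ∈ S
  add_mem : ∀ {x y : A}, x ∈ S → y ∈ S → x + y ∈ S
  sqmul_mem : ∀ (a : A) {x : A}, x ∈ S → a ^ 2 * x ∈ S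
  div_mem : ∀ {x : A} (n : ℕ), 0 < n → n • x ∈ S → x ∈ S

namespace GC

variable (T : GC A)

lemma zero_mem : (0 : A) ∈ T.S := by
  have := T.sqmul_mem 0 T.one_mem
  simpa using this

lemma nsmul_mem {x : A} (hx : x ∈ T.S) (n : ℕ) : n • x ∈ T.S := by
  induction n with
  | zero => simpa using T.zero_mem
  | succ k ih => rw [succ_nsmul]; exact T.add_mem ih hx

lemma nsmul_one_mem (n : ℕ) : n • (1 : A) ∈ T.S := T.nsmul_mem T.one_mem n

lemma zsmul_one_mem {z : ℤ} (hz : 0 ≤ z) : z • (1 : A) ∈ T.S := by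
  lift z to ℕ using hz
  simpa using T.nsmul_one_mem z

lemma sq_mem (a : A) : a ^ 2 ∈ T.S := by
  simpa using T.sqmul_mem a T.one_mem

lemma cone_mul_mem {σ x : A} (hσ : σ ∈ Cone A) (hx : x ∈ T.S) : σ * x ∈ T.S := by
  induction hσ using AddSubmonoid.closure_induction with
  | mem z hz => obtain ⟨a, rfl⟩ := hz; exact T.sqmul_mem a hx
  | zero => simpa using T.zero_mem
  | add u v _ _ hu hv => rw [add_mul]; exact T.add_mem hu hv

lemma cone_mem {σ : A} (hσ : σ ∈ Cone A) : σ ∈ T.S := by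
  simpa using T.cone_mul_mem hσ T.one_mem

/-- product trick: if `x, y ∈ T` and `x + y` is a positive constant, then `x*y ∈ T`. -/
lemma prod_mem_of_const_sum {x y : A} (hx : x ∈ T.S) (hy : y ∈ T.S)
    (c : ℕ) (hc : 0 < c) (hsum : x + y = c • (1 : A)) : x * y ∈ T.S := by
  have h1 : x ^ 2 * y + y ^ 2 * x ∈ T.S :=
    T.add_mem (T.sqmul_mem x hy) (T.sqmul_mem y hx)
  have h2 : x ^ 2 * y + y ^ 2 * x = (x + y) * (x * y) := by ring
  have h3 : (x + y) * (x * y) = c • (x * y) := by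
    rw [hsum, smul_mul_assoc, one_mul]
  exact T.div_mem c hc (by rw [← h3, ← h2]; exact h1)

lemma zsmul_nonneg_mem {x : A} {z : ℤ} (hz : 0 ≤ z) (hx : x ∈ T.S) : z • x ∈ T.S := by
  lift z to ℕ using hz
  rw [natCast_zsmul]
  exact T.nsmul_mem hx z

lemma zdiv_mem {x : A} {z : ℤ} (hz : 0 < z) (h : z • x ∈ T.S) : x ∈ T.S := by
  refine T.div_mem z.toNat (by omega) ?_
  have hzz : (z.toNat : ℤ) = z := Int.toNat_of_nonneg (by omega)
  have : (z.toNat : ℕ) • x = z • x := by rw [← natCast_zsmul, hzz]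
  rw [this]
  exact h

lemma prod_mem_of_const_sum_int {x y : A} (hx : x ∈ T.S) (hy : y ∈ T.S)
    (c : ℤ) (hc : 0 < c) (hsum : x + y = c • (1 : A)) : x * y ∈ T.S := by
  have h1 : x ^ 2 * y + y ^ 2 * x ∈ T.S :=
    T.add_mem (T.sqmul_mem x hy) (T.sqmul_mem y hx)
  have h3 : c • (x * y) = x ^ 2 * y + y ^ 2 * x := by
    have : (x + y) * (x * y) = x ^ 2 * y + y ^ 2 * x := by ring
    rw [← this, hsum, smul_mul_assoc, one_mul]
  exact T.zdiv_mem hc (by rw [h3]; exact h1)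

end GC

end JP
namespace JP

variable {A : Type*} [CommRing A]

def keyD (d0 : ℕ) : ℕ → ℕ
  | 0 => d0
  | j+1 => 2 * (keyD d0 j) ^ 3

def keyA (d0 : ℕ) : ℕ → ℕ
  | 0 => d0 ^ 2 - 1
  | j+1 => (keyA d0 j) ^ 2 * (3 * (keyD d0 j) ^ 2 + keyA d0 j)

def keyP (σ : A) (N d0 : ℕ) : ℕ → A
  | 0 => N • (1 : A)
  | j+1 => keyP σ N d0 j * ((3 * (keyD d0 j) ^ 2) • (1 : A) - σ * (keyP σ N d0 j) ^ 2)

lemma keyD_pos {d0 : ℕ} (h : 0 < d0) (j : ℕ) : 0 < keyD d0 j := by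
  induction j with
  | zero => exact h
  | succ k ih => simp only [keyD]; positivity

lemma keyA_pos {d0 : ℕ} (h : 2 ≤ d0) (j : ℕ) : 0 < keyA d0 j := by
  induction j with
  | zero =>
    simp only [keyA]
    have : 4 ≤ d0 ^ 2 := by nlinarith
    omega
  | succ k ih =>
    simp only [keyA]
    have := keyD_pos (by omega : 0 < d0) k
    positivity

end JP
namespace JP

variable {A : Type*} [CommRing A]

theorem key_lemma (T : GC A) (arch : ∀ a : A, ∃ n : ℕ, n • (1 : A) - a ∈ T.S)
    (f σ : A) (hσ : σ ∈ Cone A) (n₀ : ℕ) (hn₀ : 0 < n₀)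
    (hrel : σ * f - n₀ • (1 : A) ∈ T.S) : f ∈ T.S := by
  classical
  obtain ⟨N, hN2, hN1, hN1'⟩ : ∃ N : ℕ, 2 ≤ N ∧ N • (1 : A) - f ∈ T.S ∧ N • (1 : A) + f ∈ T.S := by
    obtain ⟨n₁, h1⟩ := arch f
    obtain ⟨n₂, h2⟩ := arch (-f)
    refine ⟨n₁ + n₂ + 2, by omega, ?_, ?_⟩
    · have heq : (n₁ + n₂ + 2) • (1 : A) - f = (n₁ • (1 : A) - f) + (n₂ + 2) • (1 : A) := by
        simp only [nsmul_eq_mul]; push_cast; ring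
      rw [heq]; exact T.add_mem h1 (T.nsmul_one_mem _)
    · have heq : (n₁ + n₂ + 2) • (1 : A) + f = (n₂ • (1 : A) - (-f)) + (n₁ + 2) • (1 : A) := by
        simp only [nsmul_eq_mul]; push_cast; ring
      rw [heq]; exact T.add_mem h2 (T.nsmul_one_mem _)
  obtain ⟨k, hk1, hk⟩ : ∃ k : ℕ, 1 ≤ k ∧ k • (1 : A) - σ ∈ T.S := by
    obtain ⟨k₀, hk₀⟩ := arch σ
    refine ⟨k₀ + 1, by omega, ?_⟩
    have heq : (k₀ + 1) • (1 : A) - σ = (k₀ • (1 : A) - σ) + (1 : ℕ) • (1 : A) := by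
      simp only [nsmul_eq_mul]; push_cast; ring
    rw [heq]; exact T.add_mem hk₀ (T.nsmul_one_mem _)
  have hNσ : N • σ - n₀ • (1 : A) ∈ T.S := by
    have hm := T.cone_mul_mem hσ hN1
    have heq : N • σ - n₀ • (1 : A) = σ * (N • (1 : A) - f) + (σ * f - n₀ • (1 : A)) := by
      simp only [nsmul_eq_mul]; ring
    rw [heq]; exact T.add_mem hm hrel
  have hd0 : 2 ≤ N * k := le_trans hN2 (Nat.le_mul_of_pos_right _ hk1)
  have hd0sq : 1 ≤ (N * k) ^ 2 := by nlinarith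
  -- the main induction
  have main : ∀ j : ℕ,
      ((keyA (N*k) j) • (1 : A) - ((keyD (N*k) j) ^ 2 • (1 : A) - σ * (keyP σ N (N*k) j) ^ 2) ∈ T.S) ∧
      ((keyA (N*k) j) • (1 : A) + ((keyD (N*k) j) ^ 2 • (1 : A) - σ * (keyP σ N (N*k) j) ^ 2) ∈ T.S) := by
    intro j
    induction j with
    | zero =>
      constructor
      · obtain ⟨c, hc⟩ := Nat.le.dest (show N ≤ N ^ 2 * n₀ by nlinarith)
        have hcA : (N : A) + (c : A) = (N : A) ^ 2 * (n₀ : A) := by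
          have := congrArg (Nat.cast : ℕ → A) hc
          push_cast at this
          exact this
        refine T.div_mem N (by omega) ?_
        have heq : N • ((keyA (N*k) 0) • (1 : A) - ((keyD (N*k) 0) ^ 2 • (1 : A) - σ * (keyP σ N (N*k) 0) ^ 2))
            = (N ^ 2) • (N • σ - n₀ • (1 : A)) + c • (1 : A) := by
          simp only [keyA, keyD, keyP, nsmul_eq_mul]
          push_cast [Nat.cast_sub hd0sq]
          linear_combination -hcA
        rw [heq]; exact T.add_mem (T.nsmul_mem hNσ _) (T.nsmul_one_mem c)
      · obtain ⟨c₂, hc₂⟩ := Nat.le.dest (show N ^ 2 * k + 1 ≤ 2 * (N * k) ^ 2 by nlinarith)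
        have hcA : (N : A) ^ 2 * (k : A) + 1 + (c₂ : A) = 2 * ((N : A) * k) ^ 2 := by
          have := congrArg (Nat.cast : ℕ → A) hc₂
          push_cast at this
          linear_combination this
        have heq : (keyA (N*k) 0) • (1 : A) + ((keyD (N*k) 0) ^ 2 • (1 : A) - σ * (keyP σ N (N*k) 0) ^ 2)
            = (N ^ 2) • (k • (1 : A) - σ) + c₂ • (1 : A) := by
          simp only [keyA, keyD, keyP, nsmul_eq_mul]
          push_cast [Nat.cast_sub hd0sq]
          linear_combination -hcA
        rw [heq]; exact T.add_mem (T.nsmul_mem hk _) (T.nsmul_one_mem c₂)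
    | succ j ih =>
      obtain ⟨ihp, ihm⟩ := ih
      have haj : 0 < keyA (N*k) j := keyA_pos hd0 j
      have hsum : ((keyA (N*k) j) • (1 : A) - ((keyD (N*k) j) ^ 2 • (1 : A) - σ * (keyP σ N (N*k) j) ^ 2))
          + ((keyA (N*k) j) • (1 : A) + ((keyD (N*k) j) ^ 2 • (1 : A) - σ * (keyP σ N (N*k) j) ^ 2))
          = (2 * keyA (N*k) j) • (1 : A) := by
        simp only [nsmul_eq_mul]; push_cast; ring
      have hprod := T.prod_mem_of_const_sum ihp ihm (2 * keyA (N*k) j) (by omega) hsum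
      have hsqdiff : ((keyA (N*k) j) ^ 2) • (1 : A)
          - ((keyD (N*k) j) ^ 2 • (1 : A) - σ * (keyP σ N (N*k) j) ^ 2) ^ 2 ∈ T.S := by
        have heq : ((keyA (N*k) j) • (1 : A) - ((keyD (N*k) j) ^ 2 • (1 : A) - σ * (keyP σ N (N*k) j) ^ 2))
            * ((keyA (N*k) j) • (1 : A) + ((keyD (N*k) j) ^ 2 • (1 : A) - σ * (keyP σ N (N*k) j) ^ 2))
            = ((keyA (N*k) j) ^ 2) • (1 : A)
              - ((keyD (N*k) j) ^ 2 • (1 : A) - σ * (keyP σ N (N*k) j) ^ 2) ^ 2 := by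
          simp only [nsmul_eq_mul]; push_cast; ring
        rw [← heq]; exact hprod
      have hcubediff : ((keyA (N*k) j) ^ 3) • (1 : A)
          - ((keyD (N*k) j) ^ 2 • (1 : A) - σ * (keyP σ N (N*k) j) ^ 2) ^ 3 ∈ T.S := by
        have hcone : ((2 • ((keyD (N*k) j) ^ 2 • (1 : A) - σ * (keyP σ N (N*k) j) ^ 2)
            + (keyA (N*k) j) • (1 : A)) ^ 2 + (3 * (keyA (N*k) j) ^ 2) • (1 : A)) ∈ Cone A :=
          (Cone A).add_mem (sq_mem_cone _) (natsmul_one_mem_cone _)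
        have hmem := T.cone_mul_mem hcone ihp
        refine T.div_mem 4 (by norm_num) ?_
        have heq : ((2 • ((keyD (N*k) j) ^ 2 • (1 : A) - σ * (keyP σ N (N*k) j) ^ 2)
              + (keyA (N*k) j) • (1 : A)) ^ 2 + (3 * (keyA (N*k) j) ^ 2) • (1 : A))
            * ((keyA (N*k) j) • (1 : A) - ((keyD (N*k) j) ^ 2 • (1 : A) - σ * (keyP σ N (N*k) j) ^ 2))
            = (4 : ℕ) • (((keyA (N*k) j) ^ 3) • (1 : A)
              - ((keyD (N*k) j) ^ 2 • (1 : A) - σ * (keyP σ N (N*k) j) ^ 2) ^ 3) := by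
          simp only [nsmul_eq_mul]; push_cast; ring
        rw [← heq]; exact hmem
      have hcubesum : ((keyA (N*k) j) ^ 3) • (1 : A)
          + ((keyD (N*k) j) ^ 2 • (1 : A) - σ * (keyP σ N (N*k) j) ^ 2) ^ 3 ∈ T.S := by
        have hcone : ((2 • ((keyD (N*k) j) ^ 2 • (1 : A) - σ * (keyP σ N (N*k) j) ^ 2)
            - (keyA (N*k) j) • (1 : A)) ^ 2 + (3 * (keyA (N*k) j) ^ 2) • (1 : A)) ∈ Cone A :=
          (Cone A).add_mem (sq_mem_cone _) (natsmul_one_mem_cone _)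
        have hmem := T.cone_mul_mem hcone ihm
        refine T.div_mem 4 (by norm_num) ?_
        have heq : ((2 • ((keyD (N*k) j) ^ 2 • (1 : A) - σ * (keyP σ N (N*k) j) ^ 2)
              - (keyA (N*k) j) • (1 : A)) ^ 2 + (3 * (keyA (N*k) j) ^ 2) • (1 : A))
            * ((keyA (N*k) j) • (1 : A) + ((keyD (N*k) j) ^ 2 • (1 : A) - σ * (keyP σ N (N*k) j) ^ 2))
            = (4 : ℕ) • (((keyA (N*k) j) ^ 3) • (1 : A)
              + ((keyD (N*k) j) ^ 2 • (1 : A) - σ * (keyP σ N (N*k) j) ^ 2) ^ 3) := by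
          simp only [nsmul_eq_mul]; push_cast; ring
        rw [← heq]; exact hmem
      constructor
      · have heq : (keyA (N*k) (j+1)) • (1 : A)
            - ((keyD (N*k) (j+1)) ^ 2 • (1 : A) - σ * (keyP σ N (N*k) (j+1)) ^ 2)
            = (3 * (keyD (N*k) j) ^ 2) • (((keyA (N*k) j) ^ 2) • (1 : A)
                - ((keyD (N*k) j) ^ 2 • (1 : A) - σ * (keyP σ N (N*k) j) ^ 2) ^ 2)
              + (((keyA (N*k) j) ^ 3) • (1 : A)
                - ((keyD (N*k) j) ^ 2 • (1 : A) - σ * (keyP σ N (N*k) j) ^ 2) ^ 3) := by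
          simp only [keyA, keyD, keyP, nsmul_eq_mul]; push_cast; ring
        rw [heq]; exact T.add_mem (T.nsmul_mem hsqdiff _) hcubediff
      · have heq : (keyA (N*k) (j+1)) • (1 : A)
            + ((keyD (N*k) (j+1)) ^ 2 • (1 : A) - σ * (keyP σ N (N*k) (j+1)) ^ 2)
            = (3 * (keyD (N*k) j) ^ 2) • (((keyA (N*k) j) ^ 2) • (1 : A)
                + ((keyD (N*k) j) ^ 2 • (1 : A) - σ * (keyP σ N (N*k) j) ^ 2) ^ 2)
              + (((keyA (N*k) j) ^ 3) • (1 : A)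
                + ((keyD (N*k) j) ^ 2 • (1 : A) - σ * (keyP σ N (N*k) j) ^ 2) ^ 3) := by
          simp only [keyA, keyD, keyP, nsmul_eq_mul]; push_cast; ring
        have hsqsum : ((keyA (N*k) j) ^ 2) • (1 : A)
            + ((keyD (N*k) j) ^ 2 • (1 : A) - σ * (keyP σ N (N*k) j) ^ 2) ^ 2 ∈ T.S :=
          T.add_mem (T.nsmul_one_mem _) (T.sq_mem _)
        rw [heq]; exact T.add_mem (T.nsmul_mem hsqsum _) hcubesum
  -- decay of the rational error sequence
  have hDpos : ∀ j, 0 < keyD (N*k) j := keyD_pos (by omega)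
  have hfind : ∃ m : ℕ, (keyA (N*k) m) * (N * k + 1) < (keyD (N*k) m) ^ 2 := by
    have hDQ : ∀ j, (0 : ℚ) < (keyD (N*k) j : ℚ) ^ 2 := by
      intro j
      have := hDpos j
      positivity
    set e : ℕ → ℚ := fun j => (keyA (N*k) j : ℚ) / (keyD (N*k) j : ℚ) ^ 2 with hedef
    have he_succ : ∀ j, e (j + 1) = (e j) ^ 2 * (3 + e j) / 4 := by
      intro j
      have hD : (keyD (N*k) j : ℚ) ≠ 0 := by
        have := hDpos j
        exact_mod_cast this.ne'
      have hnum : (keyA (N*k) (j+1) : ℚ)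
          = (keyA (N*k) j : ℚ)^2 * (3*(keyD (N*k) j : ℚ)^2 + (keyA (N*k) j : ℚ)) := by
        simp only [keyA]; push_cast; ring
      have hden : ((keyD (N*k) (j+1) : ℚ))^2 = 4 * (((keyD (N*k) j : ℚ))^2)^3 := by
        simp only [keyD]; push_cast; ring
      have key : ∀ x y : ℚ, y ≠ 0 → (x^2*(3*y^2+x))/(4*(y^2)^3) = (x/y^2)^2*(3 + x/y^2)/4 := by
        intro x y hy; field_simp
      simp only [hedef]
      rw [hnum, hden]
      exact key _ _ hD
    have he0lt : e 0 < 1 := by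
      rw [hedef]
      simp only []
      rw [div_lt_one (hDQ 0)]
      simp only [keyA, keyD]
      push_cast [Nat.cast_sub hd0sq]
      have : (1 : ℚ) ≤ ((N : ℚ) * k) ^ 2 := by exact_mod_cast hd0sq
      linarith
    have he0nn : 0 ≤ e 0 := by
      rw [hedef]
      positivity
    have hbound : ∀ j, 0 ≤ e j ∧ e j ≤ (e 0) ^ (j + 1) := by
      intro j
      induction j with
      | zero => exact ⟨he0nn, by simpa using le_refl (e 0)⟩
      | succ j ih =>
        obtain ⟨ih0, ih1⟩ := ih
        have hej1 : e j ≤ 1 := le_trans ih1 (pow_le_one₀ he0nn (le_of_lt he0lt))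
        constructor
        · rw [he_succ j]; positivity
        · rw [he_succ j]
          have h1 : (e j) ^ 2 * (3 + e j) / 4 ≤ (e j) ^ 2 := by nlinarith
          have h2 : (e j) ^ 2 ≤ ((e 0) ^ (j + 1)) ^ 2 := by nlinarith
          have h3 : ((e 0) ^ (j + 1)) ^ 2 = (e 0) ^ (2 * j + 2) := by ring
          have h4 : (e 0) ^ (2 * j + 2) ≤ (e 0) ^ (j + 2) :=
            pow_le_pow_of_le_one he0nn (le_of_lt he0lt) (by omega)
          calc (e j) ^ 2 * (3 + e j) / 4 ≤ (e j) ^ 2 := h1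
            _ ≤ ((e 0) ^ (j + 1)) ^ 2 := h2
            _ ≤ (e 0) ^ (j + 2) := by rw [h3]; exact h4
    have htgt : (0 : ℚ) < 1 / ((N : ℚ) * k + 1) := by positivity
    obtain ⟨m, hm⟩ := exists_pow_lt_of_lt_one htgt he0lt
    refine ⟨m, ?_⟩
    have hem : e m < 1 / ((N : ℚ) * k + 1) := by
      have h1 := (hbound m).2
      have h2 : (e 0) ^ (m + 1) ≤ (e 0) ^ m :=
        pow_le_pow_of_le_one he0nn (le_of_lt he0lt) (by omega)
      linarith
    have hpos2 : (0 : ℚ) < (N : ℚ) * k + 1 := by positivity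
    rw [hedef] at hem
    simp only [] at hem
    rw [div_lt_div_iff₀ (hDQ m) hpos2] at hem
    have : ((keyA (N*k) m) * (N * k + 1) : ℚ) < ((keyD (N*k) m) ^ 2 : ℚ) := by push_cast; linarith
    exact_mod_cast this
  obtain ⟨m, hlt⟩ := hfind
  obtain ⟨hmainp, hmainm⟩ := main m
  have ha1 : 0 < keyA (N*k) m := keyA_pos hd0 m
  have hD1 : 0 < keyD (N*k) m := hDpos m
  -- abbreviations (opaque)
  obtain ⟨a, haD⟩ : ∃ a : ℕ, a = keyA (N*k) m := ⟨_, rfl⟩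
  obtain ⟨D, hDD⟩ : ∃ D : ℕ, D = keyD (N*k) m := ⟨_, rfl⟩
  obtain ⟨P, hPP⟩ : ∃ P : A, P = keyP σ N (N*k) m := ⟨_, rfl⟩
  rw [← haD, ← hDD, ← hPP] at hmainp hmainm
  rw [← haD, ← hDD] at hlt
  rw [← haD] at ha1
  rw [← hDD] at hD1
  -- assembling the certificate
  have hX₁ : (D ^ 2) • f - ((D ^ 2) • (1 : A) - σ * P ^ 2) * f - P ^ 2 ∈ T.S := by
    have t1 := T.cone_mul_mem (sq_mem_cone P) hrel
    have t2 : (n₀ - 1) • (P ^ 2) ∈ T.S := T.nsmul_mem (T.sq_mem P) _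
    have heq : (D ^ 2) • f - ((D ^ 2) • (1 : A) - σ * P ^ 2) * f - P ^ 2
        = P ^ 2 * (σ * f - n₀ • (1 : A)) + (n₀ - 1) • (P ^ 2) := by
      simp only [nsmul_eq_mul]
      push_cast [Nat.cast_sub hn₀]
      ring
    rw [heq]; exact T.add_mem t1 t2
  have hX₂ : k • (P ^ 2) + a • (1 : A) - (D ^ 2) • (1 : A) ∈ T.S := by
    have t1 := T.cone_mul_mem (sq_mem_cone P) hk
    have heq : k • (P ^ 2) + a • (1 : A) - (D ^ 2) • (1 : A)
        = P ^ 2 * (k • (1 : A) - σ) + (a • (1 : A) - ((D ^ 2) • (1 : A) - σ * P ^ 2)) := by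
      simp only [nsmul_eq_mul]; push_cast; ring
    rw [heq]
    exact T.add_mem t1 hmainp
  have hsqdiffm : (a ^ 2) • (1 : A) - ((D ^ 2) • (1 : A) - σ * P ^ 2) ^ 2 ∈ T.S := by
    have hsum : (a • (1 : A) - ((D ^ 2) • (1 : A) - σ * P ^ 2))
        + (a • (1 : A) + ((D ^ 2) • (1 : A) - σ * P ^ 2)) = (2 * a) • (1 : A) := by
      simp only [nsmul_eq_mul]; push_cast; ring
    have hprod := T.prod_mem_of_const_sum hmainp hmainm (2 * a) (by omega) hsum
    have heq : (a • (1 : A) - ((D ^ 2) • (1 : A) - σ * P ^ 2))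
        * (a • (1 : A) + ((D ^ 2) • (1 : A) - σ * P ^ 2))
        = (a ^ 2) • (1 : A) - ((D ^ 2) • (1 : A) - σ * P ^ 2) ^ 2 := by
      simp only [nsmul_eq_mul]; push_cast; ring
    rw [← heq]; exact hprod
  have hN2f : (N ^ 2) • (1 : A) - f ^ 2 ∈ T.S := by
    have hsum : (N • (1 : A) - f) + (N • (1 : A) + f) = (2 * N) • (1 : A) := by
      simp only [nsmul_eq_mul]; push_cast; ring
    have hprod := T.prod_mem_of_const_sum hN1 hN1' (2 * N) (by omega) hsum
    have heq : (N • (1 : A) - f) * (N • (1 : A) + f) = (N ^ 2) • (1 : A) - f ^ 2 := by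
      simp only [nsmul_eq_mul]; push_cast; ring
    rw [← heq]; exact hprod
  have hX₃ : (2 * N * a) • (((D ^ 2) • (1 : A) - σ * P ^ 2) * f)
      + (2 * N ^ 2 * a ^ 2) • (1 : A) ∈ T.S := by
    have heq : (2 * N * a) • (((D ^ 2) • (1 : A) - σ * P ^ 2) * f) + (2 * N ^ 2 * a ^ 2) • (1 : A)
        = (N • ((D ^ 2) • (1 : A) - σ * P ^ 2) + a • f) ^ 2
          + (N ^ 2) • ((a ^ 2) • (1 : A) - ((D ^ 2) • (1 : A) - σ * P ^ 2) ^ 2)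
          + (a ^ 2) • ((N ^ 2) • (1 : A) - f ^ 2) := by
      simp only [nsmul_eq_mul]; push_cast; ring
    rw [heq]
    exact T.add_mem (T.add_mem (T.sq_mem _) (T.nsmul_mem hsqdiffm _)) (T.nsmul_mem hN2f _)
  obtain ⟨c, hc⟩ := Nat.le.dest
    (show 2 * k * N ^ 2 * a ^ 2 + 2 * N * a ^ 2 ≤ 2 * N * a * D ^ 2 by
      have h' : a * (N * k + 1) + 1 ≤ D ^ 2 := hlt
      have h'' := Nat.mul_le_mul_left (2 * N * a) h'
      nlinarith [h''])
  have hcA : 2 * (k : A) * (N : A) ^ 2 * (a : A) ^ 2 + 2 * (N : A) * (a : A) ^ 2 + (c : A)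
      = 2 * (N : A) * (a : A) * (D : A) ^ 2 := by
    have := congrArg (Nat.cast : ℕ → A) hc
    push_cast at this
    linear_combination this
  have hZ : k • ((2 * N * a) • ((D ^ 2) • f - ((D ^ 2) • (1 : A) - σ * P ^ 2) * f - P ^ 2)
        + ((2 * N * a) • (((D ^ 2) • (1 : A) - σ * P ^ 2) * f) + (2 * N ^ 2 * a ^ 2) • (1 : A)))
      + (2 * N * a) • (k • (P ^ 2) + a • (1 : A) - (D ^ 2) • (1 : A)) ∈ T.S :=
    T.add_mem (T.nsmul_mem (T.add_mem (T.nsmul_mem hX₁ _) hX₃) _) (T.nsmul_mem hX₂ _)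
  have heqF : (2 * N * a * k * D ^ 2) • f
      = (k • ((2 * N * a) • ((D ^ 2) • f - ((D ^ 2) • (1 : A) - σ * P ^ 2) * f - P ^ 2)
          + ((2 * N * a) • (((D ^ 2) • (1 : A) - σ * P ^ 2) * f) + (2 * N ^ 2 * a ^ 2) • (1 : A)))
        + (2 * N * a) • (k • (P ^ 2) + a • (1 : A) - (D ^ 2) • (1 : A))) + c • (1 : A) := by
    simp only [nsmul_eq_mul]
    push_cast
    linear_combination -hcA
  refine T.div_mem (2 * N * a * k * D ^ 2) (by positivity) ?_
  rw [heqF]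
  exact T.add_mem hZ (T.nsmul_one_mem c)

end JP
namespace JP

variable {A : Type*} [CommRing A]

def IsGC (S : Set A) : Prop :=
  (1 : A) ∈ S ∧ (∀ x ∈ S, ∀ y ∈ S, x + y ∈ S) ∧ (∀ a : A, ∀ x ∈ S, a ^ 2 * x ∈ S) ∧
    (∀ x : A, ∀ n : ℕ, 0 < n → n • x ∈ S → x ∈ S)

def IsGC.toGC {S : Set A} (h : IsGC S) : GC A where
  S := S
  one_mem := h.1
  add_mem := fun {x y} hx hy => h.2.1 x hx y hy
  sqmul_mem := fun a {x} hx => h.2.2.1 a x hx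
  div_mem := fun {x} n hn hx => h.2.2.2 x n hn hx

@[simp] lemma IsGC.toGC_S {S : Set A} (h : IsGC S) : h.toGC.S = S := rfl

/-- extension of a good cone by an element. -/
def Ext (S : Set A) (b : A) : Set A :=
  {x | ∃ n : ℕ, 0 < n ∧ ∃ t ∈ S, ∃ σ ∈ Cone A, n • x = t + σ * b}

lemma subset_ext {S : Set A} (hS : IsGC S) (b : A) : S ⊆ Ext S b := by
  intro x hx
  exact ⟨1, one_pos, x, hx, 0, (Cone A).zero_mem, by simp⟩

lemma mem_ext_self {S : Set A} (hS : IsGC S) (b : A) : b ∈ Ext S b :=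
  ⟨1, one_pos, 0, hS.toGC.zero_mem, 1, one_mem_cone, by simp⟩

lemma isGC_ext {S : Set A} (hS : IsGC S) (b : A) : IsGC (Ext S b) := by
  refine ⟨subset_ext hS b hS.1, ?_, ?_, ?_⟩
  · rintro x ⟨n₁, hn₁, t₁, ht₁, σ₁, hσ₁, he₁⟩ y ⟨n₂, hn₂, t₂, ht₂, σ₂, hσ₂, he₂⟩
    refine ⟨n₁ * n₂, Nat.mul_pos hn₁ hn₂, n₂ • t₁ + n₁ • t₂,
      hS.2.1 _ (hS.toGC.nsmul_mem ht₁ n₂) _ (hS.toGC.nsmul_mem ht₂ n₁),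
      n₂ • σ₁ + n₁ • σ₂, (Cone A).add_mem ((Cone A).nsmul_mem hσ₁ n₂) ((Cone A).nsmul_mem hσ₂ n₁), ?_⟩
    have e₁ := congrArg (fun z => n₂ • z) he₁
    have e₂ := congrArg (fun z => n₁ • z) he₂
    simp only [nsmul_eq_mul] at e₁ e₂ ⊢
    push_cast at e₁ e₂ ⊢
    linear_combination e₁ + e₂
  · rintro a x ⟨n, hn, t, ht, σ, hσ, he⟩
    refine ⟨n, hn, a ^ 2 * t, hS.2.2.1 a _ ht, a ^ 2 * σ,
      cone_mul_cone (sq_mem_cone a) hσ, ?_⟩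
    have e := congrArg (fun z => a ^ 2 * z) he
    simp only [nsmul_eq_mul] at e ⊢
    linear_combination e
  · rintro x m hm ⟨n, hn, t, ht, σ, hσ, he⟩
    refine ⟨n * m, Nat.mul_pos hn hm, t, ht, σ, hσ, ?_⟩
    rw [mul_smul]
    exact he

lemma neg_const_not_mem {S : Set A} (hS : IsGC S) (hproper : (-1 : A) ∉ S)
    {c : ℤ} (hc : c < 0) (h : c • (1 : A) ∈ S) : False := by
  apply hproper
  refine hS.2.2.2 _ (-c).toNat (by omega) ?_
  have htn : ((-c).toNat : ℤ) = -c := Int.toNat_of_nonneg (by omega)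
  have heq : ((-c).toNat : ℕ) • (-1 : A) = c • (1 : A) := by
    have h1 : ((-c).toNat : ℕ) • (-1 : A) = ((-c).toNat : ℤ) • (-1 : A) :=
      (natCast_zsmul _ _).symm
    rw [h1, htn, neg_zsmul, smul_neg, neg_neg]
  rw [heq]; exact h

lemma onestep {S : Set A} (hS : IsGC S)
    (harch : ∀ a : A, ∃ n : ℕ, n • (1 : A) - a ∈ S) (hproper : (-1 : A) ∉ S) (b : A)
    (h1 : (-1 : A) ∈ Ext S b) (h2 : (-1 : A) ∈ Ext S (-b)) : False := by
  obtain ⟨n₁, hn₁, t₁, ht₁, σ₁, hσ₁, e₁⟩ := h1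
  obtain ⟨n₂, hn₂, t₂, ht₂, σ₂, hσ₂, e₂⟩ := h2
  obtain ⟨K, hKb, hKb'⟩ : ∃ K : ℕ, K • (1 : A) - b ∈ S ∧ K • (1 : A) + b ∈ S := by
    obtain ⟨m₁, hm₁⟩ := harch b
    obtain ⟨m₂, hm₂⟩ := harch (-b)
    refine ⟨m₁ + m₂, ?_, ?_⟩
    · have heq : (m₁ + m₂) • (1 : A) - b = (m₁ • (1 : A) - b) + m₂ • (1 : A) := by
        simp only [nsmul_eq_mul]; push_cast; ring
      rw [heq]; exact hS.2.1 _ hm₁ _ (hS.toGC.nsmul_one_mem m₂)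
    · have heq : (m₁ + m₂) • (1 : A) + b = (m₂ • (1 : A) - (-b)) + m₁ • (1 : A) := by
        simp only [nsmul_eq_mul]; push_cast; ring
      rw [heq]; exact hS.2.1 _ hm₂ _ (hS.toGC.nsmul_one_mem m₁)
  have hs : σ₂ * t₁ + σ₁ * t₂ ∈ S :=
    hS.2.1 _ (hS.toGC.cone_mul_mem hσ₂ ht₁) _ (hS.toGC.cone_mul_mem hσ₁ ht₂)
  have m1 : K • σ₁ - n₁ • (1 : A) ∈ S := by
    have heq : K • σ₁ - n₁ • (1 : A) = σ₁ * (K • (1 : A) + b) + t₁ := by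
      simp only [nsmul_eq_mul] at e₁ ⊢
      linear_combination e₁
    rw [heq]; exact hS.2.1 _ (hS.toGC.cone_mul_mem hσ₁ hKb') _ ht₁
  have m2 : K • σ₂ - n₂ • (1 : A) ∈ S := by
    have heq : K • σ₂ - n₂ • (1 : A) = σ₂ * (K • (1 : A) - b) + t₂ := by
      simp only [nsmul_eq_mul] at e₂ ⊢
      linear_combination e₂
    rw [heq]; exact hS.2.1 _ (hS.toGC.cone_mul_mem hσ₂ hKb) _ ht₂
  have hfin : (2 * n₁ * n₂) • (-1 : A) ∈ S := by
    have hmem : n₂ • (K • σ₁ - n₁ • (1 : A)) + n₁ • (K • σ₂ - n₂ • (1 : A))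
        + K • (σ₂ * t₁ + σ₁ * t₂) ∈ S :=
      hS.2.1 _ (hS.2.1 _ (hS.toGC.nsmul_mem m1 n₂) _ (hS.toGC.nsmul_mem m2 n₁)) _
        (hS.toGC.nsmul_mem hs K)
    have heq : (2 * n₁ * n₂) • (-1 : A)
        = n₂ • (K • σ₁ - n₁ • (1 : A)) + n₁ • (K • σ₂ - n₂ • (1 : A))
          + K • (σ₂ * t₁ + σ₁ * t₂) := by
      simp only [nsmul_eq_mul] at e₁ e₂ ⊢
      push_cast
      linear_combination (K : A) * σ₂ * e₁ + (K : A) * σ₁ * e₂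
    rw [heq]; exact hmem
  exact hproper (hS.2.2.2 _ (2 * n₁ * n₂) (by positivity) hfin)

end JP
namespace JP

variable {A : Type*} [CommRing A]

def ubSet (S : Set A) (a : A) : Set ℝ :=
  {x | ∃ (p : ℤ) (q : ℕ), 0 < q ∧ p • (1 : A) - (q : ℤ) • a ∈ S ∧ x = (p : ℝ) / (q : ℝ)}

noncomputable def phi (S : Set A) (a : A) : ℝ := sInf (ubSet S a)

set_option maxHeartbeats 1000000 in
theorem exists_hom {S : Set A} (hS : IsGC S)
    (harch : ∀ a : A, ∃ n : ℕ, n • (1 : A) - a ∈ S)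
    (hproper : (-1 : A) ∉ S) (hcomp : ∀ a : A, a ∈ S ∨ -a ∈ S) :
    ∃ Φ : A →+* ℝ, ∀ a ∈ S, 0 ≤ Φ a := by
  classical
  have negconst : ∀ c : ℤ, c < 0 → c • (1 : A) ∈ S → False := fun c hc h =>
    neg_const_not_mem hS hproper hc h
  have hne : ∀ a : A, (ubSet S a).Nonempty := by
    intro a
    obtain ⟨n, hn⟩ := harch a
    refine ⟨(n : ℝ), (n : ℤ), 1, one_pos, ?_, by norm_num⟩
    have heq : (n : ℤ) • (1 : A) - ((1 : ℕ) : ℤ) • a = n • (1 : A) - a := by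
      rw [natCast_zsmul]; norm_num
    rw [heq]; exact hn
  have hlow : ∀ a : A, ∃ n : ℕ, ∀ x ∈ ubSet S a, -(n : ℝ) ≤ x := by
    intro a
    obtain ⟨n, hn⟩ := harch (-a)
    refine ⟨n, ?_⟩
    rintro x ⟨p, q, hq, hmem, rfl⟩
    have key : 0 ≤ p + (n : ℤ) * q := by
      by_contra hneg
      push_neg at hneg
      have helt : (p + (n : ℤ) * q) • (1 : A)
          = (p • (1 : A) - (q : ℤ) • a) + (q : ℤ) • (n • (1 : A) - (-a)) := by
        simp only [zsmul_eq_mul, nsmul_eq_mul]; push_cast; ring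
      exact negconst _ hneg (by
        rw [helt]
        exact hS.2.1 _ hmem _ (hS.toGC.zsmul_nonneg_mem (Int.natCast_nonneg _) hn))
    have hq' : (0 : ℝ) < q := by exact_mod_cast hq
    rw [le_div_iff₀ hq']
    have h2 : (0 : ℝ) ≤ (p : ℝ) + (n : ℝ) * q := by exact_mod_cast key
    linarith
  have hbdd : ∀ a : A, BddBelow (ubSet S a) := by
    intro a
    obtain ⟨n, hn⟩ := hlow a
    exact ⟨-(n : ℝ), fun x hx => hn x hx⟩
  have phi_le : ∀ (a : A) (p : ℤ) (q : ℕ), 0 < q → p • (1 : A) - (q : ℤ) • a ∈ S →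
      phi S a ≤ (p : ℝ) / q := by
    intro a p q hq hmem
    exact csInf_le (hbdd a) ⟨p, q, hq, hmem, rfl⟩
  have le_phi : ∀ (a : A) (c : ℝ),
      (∀ (p : ℤ) (q : ℕ), 0 < q → p • (1 : A) - (q : ℤ) • a ∈ S → c ≤ (p : ℝ) / q) →
      c ≤ phi S a := by
    intro a c h
    refine le_csInf (hne a) ?_
    rintro x ⟨p, q, hq, hmem, rfl⟩
    exact h p q hq hmem
  have exists_ub_lt : ∀ (a : A) (x : ℝ), phi S a < x →
      ∃ (p : ℤ) (q : ℕ), 0 < q ∧ p • (1 : A) - (q : ℤ) • a ∈ S ∧ (p : ℝ) / q < x := by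
    intro a x hx
    obtain ⟨y, hy, hyx⟩ := exists_lt_of_csInf_lt (hne a) hx
    obtain ⟨p, q, hq, hmem, rfl⟩ := hy
    exact ⟨p, q, hq, hmem, hyx⟩
  have mem_of_le : ∀ (a : A) (p₁ : ℤ) (q₁ : ℕ) (p₂ : ℤ) (q₂ : ℕ), 0 < q₁ → 0 < q₂ →
      p₁ • (1 : A) - (q₁ : ℤ) • a ∈ S → (p₁ : ℝ) / q₁ ≤ (p₂ : ℝ) / q₂ →
      p₂ • (1 : A) - (q₂ : ℤ) • a ∈ S := by
    intro a p₁ q₁ p₂ q₂ hq₁ hq₂ hmem hle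
    have hq₁' : (0 : ℝ) < q₁ := by exact_mod_cast hq₁
    have hq₂' : (0 : ℝ) < q₂ := by exact_mod_cast hq₂
    have hz : p₁ * q₂ ≤ p₂ * q₁ := by
      have := (div_le_div_iff₀ hq₁' hq₂').mp hle
      exact_mod_cast this
    have helt : (q₁ : ℤ) • (p₂ • (1 : A) - (q₂ : ℤ) • a)
        = (q₂ : ℤ) • (p₁ • (1 : A) - (q₁ : ℤ) • a) + (p₂ * q₁ - p₁ * q₂) • (1 : A) := by
      simp only [zsmul_eq_mul]; push_cast; ring
    refine hS.toGC.zdiv_mem (show (0 : ℤ) < (q₁ : ℤ) by exact_mod_cast hq₁) ?_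
    rw [helt]
    exact hS.2.1 _ (hS.toGC.zsmul_nonneg_mem (Int.natCast_nonneg _) hmem) _
      (hS.toGC.zsmul_nonneg_mem (by linarith) hS.toGC.one_mem)
  have phi_lower : ∀ (a : A) (p : ℤ) (q : ℕ), 0 < q → (q : ℤ) • a - p • (1 : A) ∈ S →
      (p : ℝ) / q ≤ phi S a := by
    intro a p q hq hmem
    refine le_phi a _ ?_
    intro p' q' hq' hmem'
    have key : 0 ≤ p' * q - p * q' := by
      by_contra hneg
      push_neg at hneg
      have helt : (p' * q - p * q') • (1 : A)
          = (q' : ℤ) • ((q : ℤ) • a - p • (1 : A)) + (q : ℤ) • (p' • (1 : A) - (q' : ℤ) • a) := by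
        simp only [zsmul_eq_mul]; push_cast; ring
      exact negconst _ hneg (by
        rw [helt]
        exact hS.2.1 _ (hS.toGC.zsmul_nonneg_mem (Int.natCast_nonneg _) hmem) _
          (hS.toGC.zsmul_nonneg_mem (Int.natCast_nonneg _) hmem'))
    have hq1 : (0 : ℝ) < q := by exact_mod_cast hq
    have hq2 : (0 : ℝ) < q' := by exact_mod_cast hq'
    rw [div_le_div_iff₀ hq1 hq2]
    have h2 : (0 : ℝ) ≤ (p' : ℝ) * q - (p : ℝ) * q' := by exact_mod_cast key
    linarith
  have phi_nonneg : ∀ a ∈ S, 0 ≤ phi S a := by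
    intro a ha
    have h := phi_lower a 0 1 one_pos (by simpa using ha)
    simpa using h
  have phi_one : phi S 1 = 1 := by
    have h1 : phi S 1 ≤ 1 := by
      have h := phi_le 1 1 1 one_pos (by simpa using hS.toGC.zero_mem)
      simpa using h
    have h2 : (1 : ℝ) ≤ phi S 1 := by
      have h := phi_lower 1 1 1 one_pos (by simpa using hS.toGC.zero_mem)
      simpa using h
    linarith
  have mem_add : ∀ (a b : A) (p₁ : ℤ) (q₁ : ℕ) (p₂ : ℤ) (q₂ : ℕ), 0 < q₁ → 0 < q₂ →
      p₁ • (1 : A) - (q₁ : ℤ) • a ∈ S → p₂ • (1 : A) - (q₂ : ℤ) • b ∈ S →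
      (p₁ * q₂ + p₂ * q₁) • (1 : A) - ((q₁ * q₂ : ℕ) : ℤ) • (a + b) ∈ S := by
    intro a b p₁ q₁ p₂ q₂ hq₁ hq₂ h₁ h₂
    have helt : (p₁ * q₂ + p₂ * q₁) • (1 : A) - ((q₁ * q₂ : ℕ) : ℤ) • (a + b)
        = (q₂ : ℤ) • (p₁ • (1 : A) - (q₁ : ℤ) • a) + (q₁ : ℤ) • (p₂ • (1 : A) - (q₂ : ℤ) • b) := by
      simp only [zsmul_eq_mul]; push_cast; ring
    rw [helt]
    exact hS.2.1 _ (hS.toGC.zsmul_nonneg_mem (Int.natCast_nonneg _) h₁) _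
      (hS.toGC.zsmul_nonneg_mem (Int.natCast_nonneg _) h₂)
  have phi_add_le : ∀ a b : A, phi S (a + b) ≤ phi S a + phi S b := by
    intro a b
    by_contra hcon
    push_neg at hcon
    have hεpos : 0 < (phi S (a + b) - phi S a - phi S b) / 2 := by linarith
    set ε := (phi S (a + b) - phi S a - phi S b) / 2 with hε
    obtain ⟨p₁, q₁, hq₁, hm₁, hlt₁⟩ := exists_ub_lt a (phi S a + ε) (by linarith)
    obtain ⟨p₂, q₂, hq₂, hm₂, hlt₂⟩ := exists_ub_lt b (phi S b + ε) (by linarith)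
    have hmem := mem_add a b p₁ q₁ p₂ q₂ hq₁ hq₂ hm₁ hm₂
    have hle := phi_le (a + b) _ _ (Nat.mul_pos hq₁ hq₂) hmem
    have hq₁' : (0 : ℝ) < q₁ := by exact_mod_cast hq₁
    have hq₂' : (0 : ℝ) < q₂ := by exact_mod_cast hq₂
    have hval : ((p₁ * q₂ + p₂ * q₁ : ℤ) : ℝ) / ((q₁ * q₂ : ℕ) : ℝ)
        = (p₁ : ℝ) / q₁ + (p₂ : ℝ) / q₂ := by
      first
      | (push_cast; field_simp; ring)
      | (push_cast; field_simp)
    rw [hval] at hle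
    linarith
  have phi_neg_add : ∀ a : A, phi S a + phi S (-a) = 0 := by
    intro a
    have hge : 0 ≤ phi S a + phi S (-a) := by
      have h1 : -(phi S (-a)) ≤ phi S a := by
        refine le_phi a _ ?_
        intro p q hq hmem
        have hmm : (q : ℤ) • (-a) - (-p) • (1 : A) ∈ S := by
          have heq : (q : ℤ) • (-a) - (-p) • (1 : A) = p • (1 : A) - (q : ℤ) • a := by
            simp only [zsmul_eq_mul]; push_cast; ring
          rw [heq]; exact hmem
        have h2 := phi_lower (-a) (-p) q hq hmm
        have h3 : -((p : ℝ) / q) ≤ phi S (-a) := by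
          have hne2 : -((p : ℝ) / q) = ((-p : ℤ) : ℝ) / q := by push_cast; ring
          rw [hne2]; exact h2
        linarith
      linarith
    have hle : phi S a + phi S (-a) ≤ 0 := by
      by_contra hcon
      push_neg at hcon
      have hlt : -phi S (-a) < phi S a := by linarith
      obtain ⟨r, hr1, hr2⟩ := exists_rat_btwn hlt
      have hq : 0 < r.den := r.pos
      have hcast : (r : ℝ) = (r.num : ℝ) / (r.den : ℝ) := by rw [Rat.cast_def]
      have hnotmem : r.num • (1 : A) - (r.den : ℤ) • a ∉ S := by
        intro hmem
        have h := phi_le a r.num r.den hq hmem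
        rw [← hcast] at h
        linarith
      have hmem2 : (r.den : ℤ) • a - r.num • (1 : A) ∈ S := by
        rcases hcomp (r.num • (1 : A) - (r.den : ℤ) • a) with h | h
        · exact absurd h hnotmem
        · rw [show -(r.num • (1 : A) - (r.den : ℤ) • a)
              = (r.den : ℤ) • a - r.num • (1 : A) by ring] at h
          exact h
      have h := phi_le (-a) (-r.num) r.den hq (by
        rw [show (-r.num) • (1 : A) - (r.den : ℤ) • (-a)
            = (r.den : ℤ) • a - r.num • (1 : A) by
          simp only [zsmul_eq_mul]; push_cast; ring]
        exact hmem2)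
      have h2 : phi S (-a) ≤ -(r : ℝ) := by
        have hne2 : -(r : ℝ) = ((-r.num : ℤ) : ℝ) / (r.den : ℝ) := by
          rw [hcast]; push_cast; ring
        rw [hne2]; exact h
      linarith
    linarith
  have phi_neg : ∀ a : A, phi S (-a) = -phi S a := by
    intro a
    have := phi_neg_add a
    linarith
  have phi_add : ∀ a b : A, phi S (a + b) = phi S a + phi S b := by
    intro a b
    have h1 := phi_add_le a b
    have h2 := phi_add_le (-a) (-b)
    rw [show -a + -b = -(a + b) by ring] at h2
    rw [phi_neg, phi_neg, phi_neg] at h2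
    linarith
  have phi_zero : phi S 0 = 0 := by
    have h := phi_neg_add 0
    rw [neg_zero] at h
    linarith
  have phi_nsmul : ∀ (n : ℕ) (a : A), phi S (n • a) = n * phi S a := by
    intro n a
    induction n with
    | zero => simpa using phi_zero
    | succ m ih => rw [succ_nsmul, phi_add, ih]; push_cast; ring
  have phi_zsmul : ∀ (z : ℤ) (a : A), phi S (z • a) = z * phi S a := by
    intro z a
    obtain ⟨n, rfl | rfl⟩ := z.eq_nat_or_neg
    · rw [natCast_zsmul, phi_nsmul]; push_cast; ring
    · rw [neg_zsmul, natCast_zsmul, phi_neg, phi_nsmul]; push_cast; ring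
  have phi_sq_ge : ∀ a : A, (phi S a) ^ 2 ≤ phi S (a * a) := by
    intro a
    by_contra hcon
    push_neg at hcon
    have hδpos : 0 < (phi S a) ^ 2 - phi S (a * a) := by linarith
    set δ := (phi S a) ^ 2 - phi S (a * a) with hδ
    set d := min 1 δ with hd
    have hd0 : 0 < d := lt_min one_pos hδpos
    obtain ⟨r, hr1, hr2⟩ := exists_rat_btwn (show phi S a - d < phi S a by linarith)
    have hq : 0 < r.den := r.pos
    have hqR : (0 : ℝ) < (r.den : ℝ) := by exact_mod_cast hq
    have hcast : (r : ℝ) = (r.num : ℝ) / (r.den : ℝ) := by rw [Rat.cast_def]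
    have hmemX : ((r.den : ℤ) • a - r.num • (1 : A)) * ((r.den : ℤ) • a - r.num • (1 : A)) ∈ S := by
      have h := hS.toGC.sq_mem ((r.den : ℤ) • a - r.num • (1 : A))
      rwa [sq] at h
    have hX : ((r.den : ℤ) • a - r.num • (1 : A)) * ((r.den : ℤ) • a - r.num • (1 : A))
        = ((r.den ^ 2 : ℤ)) • (a * a) + ((-(2 * r.num * r.den)) • a + (r.num ^ 2) • (1 : A)) := by
      simp only [zsmul_eq_mul]; push_cast; ring
    have hφX : (0 : ℝ) ≤ phi S (((r.den ^ 2 : ℤ)) • (a * a)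
        + ((-(2 * r.num * r.den)) • a + (r.num ^ 2) • (1 : A))) :=
      phi_nonneg _ (by rw [← hX]; exact hmemX)
    rw [phi_add, phi_add, phi_zsmul, phi_zsmul, phi_zsmul, phi_one] at hφX
    have hnum : (r.num : ℝ) = (r : ℝ) * r.den := by rw [hcast]; field_simp
    have hkey : 0 ≤ phi S (a * a) - 2 * (r : ℝ) * phi S a + (r : ℝ) ^ 2 := by
      have hpos : (0 : ℝ) < ((r.den : ℝ)) ^ 2 := by positivity
      have heq2 : ((r.den : ℝ)) ^ 2 * (phi S (a * a) - 2 * (r : ℝ) * phi S a + (r : ℝ) ^ 2)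
          = ((r.den ^ 2 : ℤ) : ℝ) * phi S (a * a)
            + (((-(2 * r.num * r.den)) : ℤ) : ℝ) * phi S a + ((r.num ^ 2 : ℤ) : ℝ) * 1 := by
        push_cast
        rw [hnum]
        ring
      have hX2 : 0 ≤ ((r.den : ℝ)) ^ 2 * (phi S (a * a) - 2 * (r : ℝ) * phi S a + (r : ℝ) ^ 2) := by
        rw [heq2]
        linarith [hφX]
      calc (0 : ℝ) ≤ (((r.den : ℝ)) ^ 2 * (phi S (a * a) - 2 * (r : ℝ) * phi S a + (r : ℝ) ^ 2))
            / ((r.den : ℝ)) ^ 2 := div_nonneg hX2 (le_of_lt hpos)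
        _ = phi S (a * a) - 2 * (r : ℝ) * phi S a + (r : ℝ) ^ 2 := by field_simp
    have hsq : (phi S a - r) ^ 2 < δ := by
      nlinarith [min_le_left 1 δ, min_le_right 1 δ]
    nlinarith [hkey, hsq]
  have phi_sq_le : ∀ a : A, phi S (a * a) ≤ (phi S a) ^ 2 := by
    intro a
    set c := max (phi S a) (phi S (-a)) with hc
    have hval := phi_neg_add a
    have hc0 : 0 ≤ c := by
      rcases le_total 0 (phi S a) with h | h
      · exact le_trans h (le_max_left _ _)
      · exact le_trans (by linarith) (le_max_right _ _)
    have hcsq : c ^ 2 = (phi S a) ^ 2 := by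
      rcases le_total 0 (phi S a) with h | h
      · rw [hc, max_eq_left (by linarith)]
      · rw [hc, max_eq_right (by linarith)]
        nlinarith
    have hub : ∀ r : ℚ, c < (r : ℝ) → phi S (a * a) ≤ (r : ℝ) ^ 2 := by
      intro r hr
      have hq : 0 < r.den := r.pos
      have hqR : (0 : ℝ) < (r.den : ℝ) := by exact_mod_cast hq
      have hcast : (r : ℝ) = (r.num : ℝ) / (r.den : ℝ) := by rw [Rat.cast_def]
      have hma : r.num • (1 : A) - (r.den : ℤ) • a ∈ S := by
        obtain ⟨p, q, hq', hm, hlt⟩ := exists_ub_lt a (r : ℝ)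
          (lt_of_le_of_lt (le_max_left _ _) hr)
        exact mem_of_le a p q r.num r.den hq' hq hm (by rw [← hcast]; linarith)
      have hma' : r.num • (1 : A) - (r.den : ℤ) • (-a) ∈ S := by
        obtain ⟨p, q, hq', hm, hlt⟩ := exists_ub_lt (-a) (r : ℝ)
          (lt_of_le_of_lt (le_max_right _ _) hr)
        exact mem_of_le (-a) p q r.num r.den hq' hq hm (by rw [← hcast]; linarith)
      have hrpos : (0 : ℝ) < (r : ℝ) := lt_of_le_of_lt hc0 hr
      have hnum_pos : 0 < r.num := by
        have : (0 : ℚ) < r := by exact_mod_cast hrpos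
        exact Rat.num_pos.mpr this
      have hy : r.num • (1 : A) + (r.den : ℤ) • a ∈ S := by
        rw [show r.num • (1 : A) + (r.den : ℤ) • a
            = r.num • (1 : A) - (r.den : ℤ) • (-a) by rw [smul_neg]; ring]
        exact hma'
      have hsum : (r.num • (1 : A) - (r.den : ℤ) • a) + (r.num • (1 : A) + (r.den : ℤ) • a)
          = (2 * r.num) • (1 : A) := by
        simp only [zsmul_eq_mul]; push_cast; ring
      have hprod := hS.toGC.prod_mem_of_const_sum_int hma hy (2 * r.num) (by omega) hsum
      have hprodeq : (r.num • (1 : A) - (r.den : ℤ) • a) * (r.num • (1 : A) + (r.den : ℤ) • a)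
          = (r.num ^ 2) • (1 : A) - ((r.den ^ 2 : ℕ) : ℤ) • (a * a) := by
        simp only [zsmul_eq_mul]; push_cast; ring
      have hle := phi_le (a * a) (r.num ^ 2) (r.den ^ 2) (by positivity)
        (by rw [← hprodeq]; exact hprod)
      have hveq : ((r.num ^ 2 : ℤ) : ℝ) / ((r.den ^ 2 : ℕ) : ℝ) = (r : ℝ) ^ 2 := by
        rw [hcast]
        push_cast
        rw [div_pow]
      rw [hveq] at hle
      exact hle
    by_contra hcon
    push_neg at hcon
    have hgpos : 0 < phi S (a * a) - c ^ 2 := by rw [hcsq]; linarith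
    set g := phi S (a * a) - c ^ 2 with hg
    have hdpos : (0 : ℝ) < g / (2 * c + 1) := by positivity
    set d := min 1 (g / (2 * c + 1)) with hd
    have hd0 : 0 < d := lt_min one_pos hdpos
    obtain ⟨r, hr1, hr2⟩ := exists_rat_btwn (show c < c + d by linarith)
    have hue := hub r hr1
    have hc1 : (0:ℝ) < 2 * c + 1 := by linarith
    have hdle : d * (2 * c + 1) ≤ g := by
      have h1 : d ≤ g / (2 * c + 1) := min_le_right _ _
      calc d * (2 * c + 1) ≤ (g / (2 * c + 1)) * (2 * c + 1) := by nlinarith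
        _ = g := by field_simp
    nlinarith [hue, hr1, hr2, min_le_left 1 (g / (2 * c + 1)), hc0]
  have phi_mul_self : ∀ a : A, phi S (a * a) = (phi S a) ^ 2 := fun a =>
    le_antisymm (phi_sq_le a) (phi_sq_ge a)
  have phi_mul : ∀ a b : A, phi S (a * b) = phi S a * phi S b := by
    intro a b
    have hid : (a + b) * (a + b) = a * a + ((2 : ℤ) • (a * b) + b * b) := by
      simp only [zsmul_eq_mul]; push_cast; ring
    have h := phi_mul_self (a + b)
    rw [hid, phi_add, phi_add, phi_zsmul, phi_mul_self, phi_mul_self, phi_add] at h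
    push_cast at h
    nlinarith [h]
  exact ⟨{ toFun := phi S, map_one' := phi_one, map_mul' := phi_mul,
           map_zero' := phi_zero, map_add' := phi_add }, phi_nonneg⟩

end JP
namespace JP

set_option maxHeartbeats 1000000 in
theorem jacobi_putinar' {A : Type*} [CommRing A] (M : Set A)
    (hM0 : (0 : A) ∈ M) (hM1 : (1 : A) ∈ M)
    (hMadd : ∀ x ∈ M, ∀ y ∈ M, x + y ∈ M)
    (hsq : ∀ a : A, ∀ m ∈ M, a ^ 2 * m ∈ M)
    (harch : ∀ a : A, ∃ n : ℕ, (n : A) - a ∈ M)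
    (f : A) (hf : ∀ ϕ : A →+* ℝ, (∀ m ∈ M, 0 ≤ ϕ m) → 0 < ϕ f) :
    ∃ n : ℕ, 0 < n ∧ n • f ∈ M := by
  classical
  have hMnsmul : ∀ x ∈ M, ∀ n : ℕ, n • x ∈ M := by
    intro x hx n
    induction n with
    | zero => simpa using hM0
    | succ m ih => rw [succ_nsmul]; exact hMadd _ ih _ hx
  have hM₁ : IsGC {x : A | ∃ n : ℕ, 0 < n ∧ n • x ∈ M} := by
    refine ⟨⟨1, one_pos, by simpa using hM1⟩, ?_, ?_, ?_⟩
    · rintro x ⟨n, hn, hx⟩ y ⟨m, hm, hy⟩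
      refine ⟨n * m, Nat.mul_pos hn hm, ?_⟩
      rw [smul_add]
      have h1 : (n * m) • x = m • (n • x) := by rw [mul_comm, mul_smul]
      have h2 : (n * m) • y = n • (m • y) := by rw [mul_smul]
      rw [h1, h2]
      exact hMadd _ (hMnsmul _ hx m) _ (hMnsmul _ hy n)
    · rintro a x ⟨n, hn, hx⟩
      refine ⟨n, hn, ?_⟩
      rw [show n • (a ^ 2 * x) = a ^ 2 * (n • x) by rw [mul_smul_comm]]
      exact hsq a _ hx
    · rintro x m hm ⟨n, hn, hx⟩
      exact ⟨n * m, Nat.mul_pos hn hm, by rwa [mul_smul]⟩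
  have harch₁ : ∀ a : A, ∃ n : ℕ, n • (1 : A) - a ∈ {x : A | ∃ n : ℕ, 0 < n ∧ n • x ∈ M} := by
    intro a
    obtain ⟨n, hn⟩ := harch a
    refine ⟨n, 1, one_pos, ?_⟩
    simpa [nsmul_eq_mul] using hn
  by_cases hcase : ∃ n : ℕ, 0 < n ∧ ∃ σ ∈ Cone A, σ * f - n • (1 : A) ∈ M
  · obtain ⟨n, hn, σ, hσ, hrel⟩ := hcase
    exact key_lemma hM₁.toGC harch₁ f σ hσ n hn ⟨1, one_pos, by simpa using hrel⟩
  · exfalso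
    -- the base cone T₀ = divisible closure of M - (sums of squares)·f
    set T₀ : Set A := {x | ∃ n : ℕ, 0 < n ∧ ∃ σ ∈ Cone A, n • x + σ * f ∈ M} with hT₀def
    have hGC₀ : IsGC T₀ := by
      constructor
      · exact ⟨1, one_pos, 0, (Cone A).zero_mem, by simpa using hM1⟩
      refine ⟨?_, ?_, ?_⟩
      · rintro x ⟨n, hn, σ₁, hσ₁, hx⟩ y ⟨m, hm, σ₂, hσ₂, hy⟩
        refine ⟨n * m, Nat.mul_pos hn hm, m • σ₁ + n • σ₂,
          (Cone A).add_mem ((Cone A).nsmul_mem hσ₁ m) ((Cone A).nsmul_mem hσ₂ n), ?_⟩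
        have hmem := hMadd _ (hMnsmul _ hx m) _ (hMnsmul _ hy n)
        have heq : (n * m) • (x + y) + (m • σ₁ + n • σ₂) * f
            = m • (n • x + σ₁ * f) + n • (m • y + σ₂ * f) := by
          simp only [nsmul_eq_mul]; push_cast; ring
        rw [heq]; exact hmem
      · rintro a x ⟨n, hn, σ, hσ, hx⟩
        refine ⟨n, hn, a ^ 2 * σ, cone_mul_cone (sq_mem_cone a) hσ, ?_⟩
        have heq : n • (a ^ 2 * x) + (a ^ 2 * σ) * f = a ^ 2 * (n • x + σ * f) := by
          simp only [nsmul_eq_mul]; ring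
        rw [heq]; exact hsq a _ hx
      · rintro x m hm ⟨n, hn, σ, hσ, hx⟩
        refine ⟨n * m, Nat.mul_pos hn hm, σ, hσ, ?_⟩
        rwa [mul_smul]
    have hMT₀ : M ⊆ T₀ := by
      intro x hx
      exact ⟨1, one_pos, 0, (Cone A).zero_mem, by simpa using hx⟩
    have hfT₀ : -f ∈ T₀ := by
      refine ⟨1, one_pos, 1, one_mem_cone, ?_⟩
      simpa using hM0
    have hproper₀ : (-1 : A) ∉ T₀ := by
      rintro ⟨n, hn, σ, hσ, hmem⟩
      refine hcase ⟨n, hn, σ, hσ, ?_⟩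
      have heq : σ * f - n • (1 : A) = n • (-1 : A) + σ * f := by
        simp only [nsmul_eq_mul]; ring
      rw [heq]; exact hmem
    -- Zorn
    set 𝒮 : Set (Set A) := {U | IsGC U ∧ T₀ ⊆ U ∧ (-1 : A) ∉ U} with h𝒮def
    have hzorn := zorn_subset_nonempty 𝒮 ?_ T₀ ⟨hGC₀, le_refl _, hproper₀⟩
    swap
    · intro c hc hchain hcne
      refine ⟨⋃₀ c, ⟨?_, ?_, ?_⟩, fun s hs => Set.subset_sUnion_of_mem hs⟩
      · obtain ⟨U, hU⟩ := hcne
        have hUg := hc hU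
        constructor
        · exact Set.mem_sUnion_of_mem hUg.1.1 hU
        refine ⟨?_, ?_, ?_⟩
        · rintro x ⟨U₁, hU₁, hx⟩ y ⟨U₂, hU₂, hy⟩
          rcases hchain.total hU₁ hU₂ with h | h
          · exact Set.mem_sUnion_of_mem ((hc hU₂).1.2.1 x (h hx) y hy) hU₂
          · exact Set.mem_sUnion_of_mem ((hc hU₁).1.2.1 x hx y (h hy)) hU₁
        · rintro a x ⟨U₁, hU₁, hx⟩
          exact Set.mem_sUnion_of_mem ((hc hU₁).1.2.2.1 a x hx) hU₁
        · rintro x n hn ⟨U₁, hU₁, hx⟩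
          exact Set.mem_sUnion_of_mem ((hc hU₁).1.2.2.2 x n hn hx) hU₁
      · obtain ⟨U, hU⟩ := hcne
        exact le_trans (hc hU).2.1 (Set.subset_sUnion_of_mem hU)
      · rintro ⟨U₁, hU₁, hx⟩
        exact (hc hU₁).2.2 hx
    obtain ⟨T, hT₀T, hTmax⟩ := hzorn
    obtain ⟨hTGC, hTT₀, hTproper⟩ := hTmax.prop
    have harchT : ∀ a : A, ∃ n : ℕ, n • (1 : A) - a ∈ T := by
      intro a
      obtain ⟨n, hn⟩ := harch a
      refine ⟨n, hTT₀ (hMT₀ ?_)⟩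
      simpa [nsmul_eq_mul] using hn
    have hcomp : ∀ a : A, a ∈ T ∨ -a ∈ T := by
      intro a
      by_cases h1 : (-1 : A) ∈ Ext T a
      · by_cases h2 : (-1 : A) ∈ Ext T (-a)
        · exact (onestep hTGC harchT hTproper a h1 h2).elim
        · right
          have hmem : Ext T (-a) ∈ 𝒮 :=
            ⟨isGC_ext hTGC (-a), le_trans hTT₀ (subset_ext hTGC (-a)), h2⟩
          have heq := hTmax.eq_of_subset hmem (subset_ext hTGC (-a))
          exact heq ▸ mem_ext_self hTGC (-a)
      · left
        have hmem : Ext T a ∈ 𝒮 :=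
          ⟨isGC_ext hTGC a, le_trans hTT₀ (subset_ext hTGC a), h1⟩
        have heq := hTmax.eq_of_subset hmem (subset_ext hTGC a)
        exact heq ▸ mem_ext_self hTGC a
    obtain ⟨Φ, hΦ⟩ := exists_hom hTGC harchT hTproper hcomp
    have hΦM : ∀ m ∈ M, 0 ≤ Φ m := fun m hm => hΦ m (hTT₀ (hMT₀ hm))
    have hpos := hf Φ hΦM
    have hneg : 0 ≤ Φ (-f) := hΦ (-f) (hTT₀ hfT₀)
    rw [map_neg] at hneg
    linarith

end JP

/-- Jacobi–Putinar: if `M` is an archimedean quadratic module in `A` and `f ∈ A`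
satisfies `ϕ(f) > 0` for every ring homomorphism `ϕ : A → ℝ` nonnegative on `M`,
then `nf ∈ M` for some `n ∈ ℕ`. -/
theorem jacobi_putinar {A : Type*} [CommRing A] (M : Set A)
    (hM0 : (0 : A) ∈ M) (hM1 : (1 : A) ∈ M)
    (hMadd : ∀ x ∈ M, ∀ y ∈ M, x + y ∈ M)
    (hsq : ∀ a : A, ∀ m ∈ M, a ^ 2 * m ∈ M)
    (harch : ∀ a : A, ∃ n : ℕ, (n : A) - a ∈ M)
    (f : A) (hf : ∀ ϕ : A →+* ℝ, (∀ m ∈ M, 0 ≤ ϕ m) → 0 < ϕ f) :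
    ∃ n : ℕ, 0 < n ∧ n • f ∈ M := by
  exact JP.jacobi_putinar' M hM0 hM1 hMadd hsq harch f hf
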